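/- Let G be the Gaussian (Forrelation) distribution on ℝ^{2N} with moments satisfying: Ĝ(I) = 0 when |I| is odd, and |Ĝ(I)| ≤ ε^i i! N^{-i/2} when |I| = 2i; let U be uniform on {-1,1}^{2N}. Define μ₀^(k) and μ₁^(k) as the even- and odd-parity mixtures 2^{-(k-1)} ∑_{|S| even/odd} G^S U^{S̄}. Then for index I = (I₁,…,I_k): (1) if |I| < 2k or some I_j = ∅, then μ̂₀(I) = μ̂₁(I); (2) if some |I_j| is odd, then μ̂₀(I) = μ̂₁(I); (3) if |I| = 2i, then |μ̂₀(I) − μ̂₁(I)| ≤ 2^{-k+1} ε^i N^{-i/2} i!. -/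

import Mathlib

open MeasureTheory ProbabilityTheory
open scoped NNReal ENNReal

/-- The moment `D̂(I) = E_{z∼D}[∏_{i∈I} z_i]` of a distribution on `ℝ^M`. -/
noncomputable def mom {M : ℕ} (D : Measure (Fin M → ℝ)) (I : Finset (Fin M)) : ℝ :=
  ∫ z, ∏ i ∈ I, z i ∂D

/-- The moment of a distribution on `(ℝ^M)^k` indexed by a block index. -/
noncomputable def blockMom {M k : ℕ} (D : Measure (Fin k → Fin M → ℝ))
    (I : Fin k → Finset (Fin M)) : ℝ :=
  ∫ z, ∏ j, ∏ i ∈ I j, z j i ∂D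

/-- The product distribution `G^S U^{S̄}`. -/
noncomputable def prodDist {M k : ℕ} (G U : Measure (Fin M → ℝ))
    (S : Finset (Fin k)) : Measure (Fin k → Fin M → ℝ) :=
  Measure.pi fun j => if j ∈ S then G else U

/-- The uniform distribution on `{-1,1}^M`. -/
noncomputable def uniformSigns (M : ℕ) : Measure (Fin M → ℝ) :=
  Measure.pi fun _ =>
    (2 : ℝ≥0∞)⁻¹ • Measure.dirac (1 : ℝ) + (2 : ℝ≥0∞)⁻¹ • Measure.dirac (-1 : ℝ)

/-- The even-parity mixture `μ₀^(k) = 2^{-(k-1)} ∑_{|S| even} G^S U^{S̄}`. -/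
noncomputable def muEven {M k : ℕ} (G : Measure (Fin M → ℝ)) :
    Measure (Fin k → Fin M → ℝ) :=
  ((2 : ℝ≥0∞) ^ (k - 1))⁻¹ •
    ∑ S ∈ Finset.univ.filter (fun S : Finset (Fin k) => Even S.card),
      prodDist G (uniformSigns M) S

/-- The odd-parity mixture `μ₁^(k) = 2^{-(k-1)} ∑_{|S| odd} G^S U^{S̄}`. -/
noncomputable def muOdd {M k : ℕ} (G : Measure (Fin M → ℝ)) :
    Measure (Fin k → Fin M → ℝ) :=
  ((2 : ℝ≥0∞) ^ (k - 1))⁻¹ •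
    ∑ S ∈ Finset.univ.filter (fun S : Finset (Fin k) => Odd S.card),
      prodDist G (uniformSigns M) S

/- ######################## Auxiliary lemmas ######################## -/

/-- The single-coordinate uniform-sign measure `½δ₁ + ½δ₋₁`. -/
noncomputable def nuSign : Measure ℝ :=
  (2 : ℝ≥0∞)⁻¹ • Measure.dirac (1 : ℝ) + (2 : ℝ≥0∞)⁻¹ • Measure.dirac (-1 : ℝ)

instance : IsProbabilityMeasure nuSign := by
  constructor
  simp [nuSign, ENNReal.inv_two_add_inv_two]

lemma integrable_dirac_aux {f : ℝ → ℝ} (a : ℝ) : Integrable f (Measure.dirac a) := by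
  refine (integrable_const (f a)).congr ?_
  simp [Filter.EventuallyEq, ae_dirac_eq]

lemma integral_id_nuSign : ∫ x, x ∂nuSign = 0 := by
  rw [nuSign, integral_add_measure
    ((integrable_dirac_aux 1).smul_measure (by simp))
    ((integrable_dirac_aux (-1)).smul_measure (by simp))]
  rw [integral_smul_measure, integral_smul_measure, integral_dirac, integral_dirac]
  simp

lemma integral_pi_prod {ι : Type*} [Fintype ι] {E : ι → Type*} [∀ i, MeasurableSpace (E i)]
    (μ : ∀ i, Measure (E i)) [∀ i, SigmaFinite (μ i)] (f : ∀ i, E i → ℝ) :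
    ∫ x, ∏ i, f i (x i) ∂Measure.pi μ = ∏ i, ∫ x, f i x ∂μ i := by
  letI : ∀ i, MeasureSpace (E i) := fun i => ⟨μ i⟩
  exact MeasureTheory.integral_fintype_prod_eq_prod f

lemma mom_uniformSigns (M : ℕ) (I : Finset (Fin M)) :
    mom (uniformSigns M) I = if I = ∅ then 1 else 0 := by
  classical
  have h1 : ∀ z : Fin M → ℝ, ∏ i ∈ I, z i = ∏ i, (if i ∈ I then z i else 1) := by
    intro z
    rw [Finset.prod_ite_mem, Finset.univ_inter]
  rw [mom]
  simp_rw [h1]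
  rw [show uniformSigns M = Measure.pi (fun _ : Fin M => nuSign) from rfl,
    integral_pi_prod (fun _ : Fin M => nuSign) (fun i x => if i ∈ I then x else 1)]
  by_cases hI : I = ∅
  · simp [hI]
  · obtain ⟨i0, hi0⟩ := Finset.nonempty_iff_ne_empty.2 hI
    rw [if_neg hI]
    refine Finset.prod_eq_zero (Finset.mem_univ i0) ?_
    simp [hi0, integral_id_nuSign]

lemma sum_powerset_neg_one_pow_card_real {α : Type*} [DecidableEq α] (x : Finset α) :
    (∑ m ∈ x.powerset, (-1 : ℝ) ^ m.card) = if x = ∅ then 1 else 0 := by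
  have h := Finset.sum_powerset_neg_one_pow_card (x := x)
  have h2 := congrArg (fun n : ℤ => (n : ℝ)) h
  push_cast at h2
  simpa using h2

/-- moments of the parity mixtures of the Forrelation
distribution `G` with the uniform distribution `U`:
(1) they agree when `|I| < 2k` or some block is empty;
(2) they agree when some block has odd size;
(3) when `|I| = 2i`, they differ by at most `2^{-k+1} ε^i N^{-i/2} i!`. -/
theorem parity_mixture_moments_forrelation
    {N k : ℕ} (hN : 1 ≤ N) (hk : 1 ≤ k) (ε : ℝ) (hε : 0 ≤ ε)
    (G : Measure (Fin (2 * N) → ℝ)) [IsProbabilityMeasure G]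
    (hGodd : ∀ I : Finset (Fin (2 * N)), Odd I.card → mom G I = 0)
    (hGbound : ∀ (I : Finset (Fin (2 * N))) (i : ℕ), I.card = 2 * i →
      |mom G I| ≤ ε ^ i * (i.factorial : ℝ) / Real.sqrt N ^ i)
    (hint : ∀ (S : Finset (Fin k)) (I : Fin k → Finset (Fin (2 * N))),
      Integrable (fun z : Fin k → Fin (2 * N) → ℝ => ∏ j, ∏ i ∈ I j, z j i)
        (prodDist G (uniformSigns (2 * N)) S)) :
    ∀ I : Fin k → Finset (Fin (2 * N)),
      (((∑ j, (I j).card) < 2 * k ∨ ∃ j, I j = ∅) →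
        blockMom (muEven (k := k) G) I = blockMom (muOdd (k := k) G) I)
      ∧ ((∃ j, Odd (I j).card) →
          blockMom (muEven (k := k) G) I = blockMom (muOdd (k := k) G) I)
      ∧ (∀ i : ℕ, (∑ j, (I j).card) = 2 * i →
          |blockMom (muEven (k := k) G) I - blockMom (muOdd (k := k) G) I|
            ≤ (1 / 2 ^ (k - 1) : ℝ) * ε ^ i * (i.factorial : ℝ)
                / Real.sqrt N ^ i) := by
  classical
  intro I
  haveI : IsProbabilityMeasure (uniformSigns (2 * N)) := by
    rw [show uniformSigns (2 * N) = Measure.pi (fun _ : Fin (2 * N) => nuSign) from rfl]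
    infer_instance
  set P : ℝ := ∏ j, mom G (I j) with hP
  set T : Finset (Fin k) := Finset.univ.filter (fun j => I j ≠ ∅) with hT
  set α : ℝ := (1 / 2 ^ (k - 1) : ℝ) with hαdef
  have hαnn : 0 ≤ α := by positivity
  have hprob : ∀ (S : Finset (Fin k)) (j : Fin k),
      IsProbabilityMeasure (if j ∈ S then G else uniformSigns (2 * N)) := by
    intro S j; split <;> infer_instance
  -- the moment of each product measure
  have hc : ∀ S : Finset (Fin k),
      blockMom (prodDist G (uniformSigns (2 * N)) S) I = if T ⊆ S then P else 0 := by
    intro S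
    haveI := hprob S
    have hfac : blockMom (prodDist G (uniformSigns (2 * N)) S) I
        = ∏ j, ∫ z : Fin (2 * N) → ℝ, ∏ i ∈ I j, z i ∂(if j ∈ S then G else uniformSigns (2 * N)) := by
      rw [blockMom, prodDist]
      exact integral_pi_prod (fun j => if j ∈ S then G else uniformSigns (2 * N))
        (fun j (z : Fin (2 * N) → ℝ) => ∏ i ∈ I j, z i)
    rw [hfac]
    by_cases hTS : T ⊆ S
    · rw [if_pos hTS, hP]
      refine Finset.prod_congr rfl fun j _ => ?_
      by_cases hjS : j ∈ S
      · rw [if_pos hjS]; rfl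
      · have hIj : I j = ∅ := by
          by_contra h
          exact hjS (hTS (by simp [hT, h]))
        rw [if_neg hjS, hIj]
        simp [mom]
    · rw [if_neg hTS]
      obtain ⟨j0, hj0T, hj0S⟩ := Finset.not_subset.1 hTS
      refine Finset.prod_eq_zero (Finset.mem_univ j0) ?_
      have hIj0 : I j0 ≠ ∅ := by simpa [hT] using hj0T
      rw [if_neg hj0S]
      have hm := mom_uniformSigns (2 * N) (I j0)
      rw [mom] at hm
      rw [hm, if_neg hIj0]
  have hαval : ((2 : ℝ≥0∞) ^ (k - 1))⁻¹.toReal = α := by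
    rw [hαdef, ENNReal.toReal_inv, ENNReal.toReal_pow]
    norm_num
  -- block moments of the mixtures
  have hEven : blockMom (muEven (k := k) G) I
      = α * ∑ S ∈ Finset.univ.filter (fun S : Finset (Fin k) => Even S.card),
          (if T ⊆ S then P else 0) := by
    rw [blockMom, muEven, integral_smul_measure,
      integral_finset_sum_measure (fun S _ => hint S I), hαval, smul_eq_mul]
    congr 1
    exact Finset.sum_congr rfl fun S _ => hc S
  have hOdd : blockMom (muOdd (k := k) G) I
      = α * ∑ S ∈ Finset.univ.filter (fun S : Finset (Fin k) => Odd S.card),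
          (if T ⊆ S then P else 0) := by
    rw [blockMom, muOdd, integral_smul_measure,
      integral_finset_sum_measure (fun S _ => hint S I), hαval, smul_eq_mul]
    congr 1
    exact Finset.sum_congr rfl fun S _ => hc S
  -- the combinatorial identity
  have hcomb : ∑ S : Finset (Fin k), (-1 : ℝ) ^ S.card * (if T ⊆ S then P else 0)
      = if T = Finset.univ then (-1 : ℝ) ^ k * P else 0 := by
    have e1 : ∀ S : Finset (Fin k), (-1 : ℝ) ^ S.card * (if T ⊆ S then P else 0)
        = if T ⊆ S then (-1 : ℝ) ^ S.card * P else 0 := by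
      intro S; split <;> simp
    simp_rw [e1]
    rw [← Finset.sum_filter]
    have e2 : ∑ S ∈ Finset.univ.filter (fun S : Finset (Fin k) => T ⊆ S),
        (-1 : ℝ) ^ S.card * P
        = ∑ R ∈ Tᶜ.powerset, (-1 : ℝ) ^ (T.card + R.card) * P := by
      refine Finset.sum_nbij' (fun S => S \ T) (fun R => T ∪ R) ?_ ?_ ?_ ?_ ?_
      · intro S hS
        simp only [Finset.mem_filter, Finset.mem_univ, true_and] at hS
        rw [Finset.mem_powerset]
        intro x hx
        rw [Finset.mem_sdiff] at hx
        simpa using hx.2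
      · intro R hR
        simp only [Finset.mem_filter, Finset.mem_univ, true_and]
        exact Finset.subset_union_left
      · intro S hS
        simp only [Finset.mem_filter, Finset.mem_univ, true_and] at hS
        exact Finset.union_sdiff_of_subset hS
      · intro R hR
        rw [Finset.mem_powerset] at hR
        refine Finset.union_sdiff_cancel_left ?_
        rw [Finset.disjoint_left]
        intro x hxT hxR
        have := hR hxR
        simp at this
        exact this hxT
      · intro S hS
        simp only [Finset.mem_filter, Finset.mem_univ, true_and] at hS
        congr 2
        have hd : Disjoint T (S \ T) := Finset.disjoint_sdiff
        rw [← Finset.card_union_of_disjoint hd, Finset.union_sdiff_of_subset hS]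
    rw [e2]
    have e3 : ∑ R ∈ Tᶜ.powerset, (-1 : ℝ) ^ (T.card + R.card) * P
        = (-1 : ℝ) ^ T.card * (∑ R ∈ Tᶜ.powerset, (-1 : ℝ) ^ R.card) * P := by
      simp_rw [pow_add]
      rw [← Finset.sum_mul, ← Finset.mul_sum]
    rw [e3, sum_powerset_neg_one_pow_card_real]
    by_cases hTu : T = Finset.univ
    · have : Tᶜ = (∅ : Finset (Fin k)) := by simp [hTu]
      rw [if_pos this, if_pos hTu, hTu]
      simp [Finset.card_univ]
    · have : Tᶜ ≠ (∅ : Finset (Fin k)) := by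
        intro h
        exact hTu (by simpa using congrArg (·ᶜ) h)
      rw [if_neg this, if_neg hTu]
      ring
  -- also split the full sum into even and odd parts
  have hsplit : ∑ S : Finset (Fin k), (-1 : ℝ) ^ S.card * (if T ⊆ S then P else 0)
      = (∑ S ∈ Finset.univ.filter (fun S : Finset (Fin k) => Even S.card),
          (if T ⊆ S then P else 0))
        - (∑ S ∈ Finset.univ.filter (fun S : Finset (Fin k) => Odd S.card),
          (if T ⊆ S then P else 0)) := by
    rw [← Finset.sum_filter_add_sum_filter_not Finset.univ
      (fun S : Finset (Fin k) => Even S.card)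
      (fun S : Finset (Fin k) => (-1 : ℝ) ^ S.card * (if T ⊆ S then P else 0))]
    have hpe : ∑ S ∈ Finset.univ.filter (fun S : Finset (Fin k) => Even S.card),
        (-1 : ℝ) ^ S.card * (if T ⊆ S then P else 0)
        = ∑ S ∈ Finset.univ.filter (fun S : Finset (Fin k) => Even S.card),
          (if T ⊆ S then P else 0) := by
      refine Finset.sum_congr rfl fun S hS => ?_
      simp only [Finset.mem_filter] at hS
      rw [hS.2.neg_one_pow, one_mul]
    have hfo : Finset.univ.filter (fun S : Finset (Fin k) => ¬ Even S.card)
        = Finset.univ.filter (fun S : Finset (Fin k) => Odd S.card) := by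
      exact Finset.filter_congr fun S _ => Nat.not_even_iff_odd
    have hpo : ∑ S ∈ Finset.univ.filter (fun S : Finset (Fin k) => ¬ Even S.card),
        (-1 : ℝ) ^ S.card * (if T ⊆ S then P else 0)
        = - ∑ S ∈ Finset.univ.filter (fun S : Finset (Fin k) => Odd S.card),
          (if T ⊆ S then P else 0) := by
      rw [hfo, ← Finset.sum_neg_distrib]
      refine Finset.sum_congr rfl fun S hS => ?_
      simp only [Finset.mem_filter] at hS
      rw [hS.2.neg_one_pow]
      ring
    rw [hpe, hpo]
    ring
  -- the difference of block moments
  have hdiff : blockMom (muEven (k := k) G) I - blockMom (muOdd (k := k) G) I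
      = α * (if T = Finset.univ then (-1 : ℝ) ^ k * P else 0) := by
    rw [hEven, hOdd, ← mul_sub, ← hsplit, hcomb]
  -- helper: if some block has odd cardinality then P = 0
  have hPodd : (∃ j, Odd (I j).card) → P = 0 := by
    rintro ⟨j, hj⟩
    exact Finset.prod_eq_zero (Finset.mem_univ j) (hGodd (I j) hj)
  refine ⟨?_, ?_, ?_⟩
  · -- part (1)
    rintro (hlt | ⟨j, hj⟩)
    · rw [← sub_eq_zero, hdiff]
      by_cases hTu : T = Finset.univ
      · rw [if_pos hTu]
        by_cases hodd : ∃ j, Odd (I j).card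
        · rw [hPodd hodd]; ring
        · exfalso
          push_neg at hodd
          have h2 : ∀ j, 2 ≤ (I j).card := by
            intro j
            have hne : I j ≠ ∅ := by
              have : j ∈ T := hTu ▸ Finset.mem_univ j
              simpa [hT] using this
            have heven : Even (I j).card := Nat.not_odd_iff_even.1 (hodd j)
            have hnz : (I j).card ≠ 0 := by
              simpa [Finset.card_eq_zero] using hne
            obtain ⟨m, hm⟩ := heven
            omega
          have : 2 * k ≤ ∑ j, (I j).card := by
            calc 2 * k = ∑ _j : Fin k, 2 := by
                  simp [Finset.sum_const, Finset.card_univ, mul_comm]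
              _ ≤ ∑ j, (I j).card := Finset.sum_le_sum fun j _ => h2 j
          omega
      · rw [if_neg hTu]; ring
    · rw [← sub_eq_zero, hdiff]
      have hTu : T ≠ Finset.univ := by
        intro h
        have : j ∈ T := h ▸ Finset.mem_univ j
        simp [hT, hj] at this
      rw [if_neg hTu]; ring
  · -- part (2)
    intro hodd
    rw [← sub_eq_zero, hdiff, hPodd hodd]
    split <;> ring
  · -- part (3)
    intro i hi
    have hsqrt : (0 : ℝ) < Real.sqrt N ^ i := by
      have : (0 : ℝ) < Real.sqrt N := Real.sqrt_pos.2 (by exact_mod_cast hN)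
      positivity
    have hRHSnn : (0 : ℝ) ≤ α * ε ^ i * (i.factorial : ℝ) / Real.sqrt N ^ i := by
      positivity
    by_cases hTu : T = Finset.univ
    · by_cases hodd : ∃ j, Odd (I j).card
      · rw [hdiff, hPodd hodd]
        simpa using hRHSnn
      · -- the main case
        push_neg at hodd
        set c : Fin k → ℕ := fun j => (I j).card / 2 with hcdef
        have hcard : ∀ j, (I j).card = 2 * c j := by
          intro j
          have heven : Even (I j).card := Nat.not_odd_iff_even.1 (hodd j)
          rw [Nat.even_iff] at heven
          simp only [hcdef]
          omega
        have hsumc : ∑ j, c j = i := by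
          have : ∑ j, (I j).card = ∑ j, 2 * c j :=
            Finset.sum_congr rfl fun j _ => hcard j
          rw [this, ← Finset.mul_sum] at hi
          omega
        have hPabs : |P| ≤ ε ^ i * (i.factorial : ℝ) / Real.sqrt N ^ i := by
          have h1 : |P| = ∏ j, |mom G (I j)| := by
            rw [hP, Finset.abs_prod]
          have h2 : ∏ j, |mom G (I j)|
              ≤ ∏ j, (ε ^ c j * ((c j).factorial : ℝ) / Real.sqrt N ^ c j) :=
            Finset.prod_le_prod (fun j _ => abs_nonneg _)
              (fun j _ => hGbound (I j) (c j) (hcard j))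
          have h3 : ∏ j, (ε ^ c j * ((c j).factorial : ℝ) / Real.sqrt N ^ c j)
              = ε ^ i * ((∏ j, (c j).factorial : ℕ) : ℝ) / Real.sqrt N ^ i := by
            rw [Finset.prod_div_distrib, Finset.prod_mul_distrib,
              Finset.prod_pow_eq_pow_sum, Finset.prod_pow_eq_pow_sum, hsumc,
              Nat.cast_prod]
          have h4 : ((∏ j, (c j).factorial : ℕ) : ℝ) ≤ (i.factorial : ℝ) := by
            have hdvd : (∏ j, (c j).factorial) ∣ (∑ j, c j).factorial :=
              Nat.prod_factorial_dvd_factorial_sum _ _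
            rw [hsumc] at hdvd
            exact_mod_cast Nat.le_of_dvd i.factorial_pos hdvd
          calc |P| = ∏ j, |mom G (I j)| := h1
            _ ≤ ∏ j, (ε ^ c j * ((c j).factorial : ℝ) / Real.sqrt N ^ c j) := h2
            _ = ε ^ i * ((∏ j, (c j).factorial : ℕ) : ℝ) / Real.sqrt N ^ i := h3
            _ ≤ ε ^ i * (i.factorial : ℝ) / Real.sqrt N ^ i := by gcongr
        have habs : |blockMom (muEven (k := k) G) I - blockMom (muOdd (k := k) G) I|
            = α * |P| := by
          rw [hdiff, if_pos hTu, abs_mul, abs_mul, abs_pow, abs_neg, abs_one,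
            one_pow, one_mul, abs_of_nonneg hαnn]
        rw [habs]
        calc α * |P| ≤ α * (ε ^ i * (i.factorial : ℝ) / Real.sqrt N ^ i) := by
              exact mul_le_mul_of_nonneg_left hPabs hαnn
          _ = α * ε ^ i * (i.factorial : ℝ) / Real.sqrt N ^ i := by ring
    · rw [hdiff, if_neg hTu]
      simpa using hRHSnn
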